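/- arXiv:0912.2219 — 2 statements merged into one kernel-verified Lean document; each statement's English description precedes it below -/
import Mathlib

section
/- Let S be the simplicial cell complex obtained by gluing two 1-simplices σ, τ along their two common vertices 1, 2. Its face ring Z[S] = Z[v₁,v₂,v_σ,v_τ]/(v₁v₂ − v_σ − v_τ, v_σ v_τ) is a free module over Z[v₁,v₂] with basis {1, v_σ}. -/
open MvPolynomial

/-- The face ring `ℤ[S] = ℤ[v₁,v₂,v_σ,v_τ]/(v₁v₂ − v_σ − v_τ, v_σ v_τ)` of the
simplicial cell complex obtained by gluing two 1-simplices `σ, τ` along their two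
common vertices `1, 2`.  Variables: `0 ↦ v₁`, `1 ↦ v₂`, `2 ↦ v_σ`, `3 ↦ v_τ`. -/
noncomputable def twoSegmentsIdeal : Ideal (MvPolynomial (Fin 4) ℤ) :=
  Ideal.span {X 0 * X 1 - X 2 - X 3, X 2 * X 3}

/-- The inclusion `ℤ[v₁,v₂] → ℤ[v₁,v₂,v_σ,v_τ]`. -/
noncomputable def inclTwo : MvPolynomial (Fin 2) ℤ →+* MvPolynomial (Fin 4) ℤ :=
  (rename (Fin.castLE (by norm_num))).toRingHom

namespace TwoSeg

abbrev B := MvPolynomial (Fin 2) ℤ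

noncomputable def c : B := X 0 * X 1

noncomputable def f : Polynomial B := Polynomial.X ^ 2 - Polynomial.C c * Polynomial.X

lemma hf : f.Monic := by
  apply Polynomial.monic_X_pow_sub
  calc (Polynomial.C c * Polynomial.X).degree ≤ _ := Polynomial.degree_mul_le _ _
    _ ≤ (0 : WithBot ℕ) + 1 := by
        gcongr
        · exact Polynomial.degree_C_le
        · exact Polynomial.degree_X_le
    _ < 2 := by norm_num

lemma hdeg : f.natDegree = 2 := by
  rw [f, Polynomial.natDegree_sub_eq_left_of_natDegree_lt, Polynomial.natDegree_X_pow]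
  rw [Polynomial.natDegree_X_pow]
  calc (Polynomial.C c * Polynomial.X).natDegree
      ≤ Polynomial.X.natDegree := Polynomial.natDegree_C_mul_le _ _
    _ < 2 := by simp

abbrev A := AdjoinRoot f

noncomputable def φ : MvPolynomial (Fin 4) ℤ →+* A :=
  eval₂Hom (Int.castRingHom A)
    ![AdjoinRoot.of f (X 0), AdjoinRoot.of f (X 1), AdjoinRoot.root f,
      AdjoinRoot.of f c - AdjoinRoot.root f]

lemma φ_X0 : φ (X 0) = AdjoinRoot.of f (X 0) := by simp [φ]
lemma φ_X1 : φ (X 1) = AdjoinRoot.of f (X 1) := by simp [φ]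
lemma φ_X2 : φ (X 2) = AdjoinRoot.root f := by simp [φ]
lemma φ_X3 : φ (X 3) = AdjoinRoot.of f c - AdjoinRoot.root f := by simp [φ]

lemma root_sq : (AdjoinRoot.root f) ^ 2 = AdjoinRoot.of f c * AdjoinRoot.root f := by
  have h := AdjoinRoot.eval₂_root f
  rw [f] at h
  simp only [Polynomial.eval₂_sub, Polynomial.eval₂_X_pow, Polynomial.eval₂_mul,
    Polynomial.eval₂_C, Polynomial.eval₂_X, sub_eq_zero] at h
  exact h

lemma φ_ker : twoSegmentsIdeal ≤ RingHom.ker φ := by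
  rw [twoSegmentsIdeal, Ideal.span_le]
  rintro x (rfl | rfl)
  · simp only [SetLike.mem_coe, RingHom.mem_ker, map_sub, map_mul, φ_X0, φ_X1, φ_X2, φ_X3]
    rw [← map_mul, show (X 0 * X 1 : B) = c from rfl]
    ring
  · simp only [SetLike.mem_coe, RingHom.mem_ker, map_mul, φ_X2, φ_X3]
    linear_combination -root_sq

noncomputable def φbar : (MvPolynomial (Fin 4) ℤ ⧸ twoSegmentsIdeal) →+* A :=
  Ideal.Quotient.lift twoSegmentsIdeal φ (fun a ha => RingHom.mem_ker.mp (φ_ker ha))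

lemma X2_rel : (X 2 : MvPolynomial (Fin 4) ℤ) ^ 2 - X 0 * X 1 * X 2 ∈ twoSegmentsIdeal := by
  have h : (X 2 : MvPolynomial (Fin 4) ℤ) ^ 2 - X 0 * X 1 * X 2
      = (-(X 2)) * (X 0 * X 1 - X 2 - X 3) + (-1) * (X 2 * X 3) := by ring
  rw [h, twoSegmentsIdeal]
  exact add_mem (Ideal.mul_mem_left _ _ (Ideal.subset_span (Or.inl rfl)))
    (Ideal.mul_mem_left _ _ (Ideal.subset_span (Or.inr rfl)))

lemma inclTwo_X0 : inclTwo (X 0) = X 0 := by simp [inclTwo]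
lemma inclTwo_X1 : inclTwo (X 1) = X 1 := by simp [inclTwo]

lemma inclTwo_c : inclTwo c = X 0 * X 1 := by
  rw [show (c : B) = X 0 * X 1 from rfl, map_mul, inclTwo_X0, inclTwo_X1]

lemma eval₂_f_zero :
    f.eval₂ ((Ideal.Quotient.mk twoSegmentsIdeal).comp inclTwo)
      (Ideal.Quotient.mk twoSegmentsIdeal (X 2)) = 0 := by
  rw [f]
  simp only [Polynomial.eval₂_sub, Polynomial.eval₂_X_pow, Polynomial.eval₂_mul,
    Polynomial.eval₂_C, Polynomial.eval₂_X, RingHom.comp_apply, inclTwo_c]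
  rw [← map_pow, ← map_mul, ← map_sub, Ideal.Quotient.eq_zero_iff_mem]
  exact X2_rel

noncomputable def ψ : A →+* (MvPolynomial (Fin 4) ℤ ⧸ twoSegmentsIdeal) :=
  AdjoinRoot.lift ((Ideal.Quotient.mk twoSegmentsIdeal).comp inclTwo)
    (Ideal.Quotient.mk twoSegmentsIdeal (X 2)) eval₂_f_zero

lemma ψ_of (b : B) : ψ (AdjoinRoot.of f b) = Ideal.Quotient.mk twoSegmentsIdeal (inclTwo b) :=
  AdjoinRoot.lift_of _

lemma ψ_root : ψ (AdjoinRoot.root f) = Ideal.Quotient.mk twoSegmentsIdeal (X 2) :=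
  AdjoinRoot.lift_root _

lemma algMap_eq : (algebraMap B A : B →+* A) = AdjoinRoot.of f := rfl

lemma φ_inclTwo (s : B) : φ (inclTwo s) = AdjoinRoot.of f s := by
  have : φ.comp inclTwo = (AdjoinRoot.of f : B →+* A) := by
    apply MvPolynomial.ringHom_ext
    · intro r
      simp [inclTwo, φ]
    · intro i
      fin_cases i
      · show φ (inclTwo (X 0)) = AdjoinRoot.of f (X 0)
        rw [inclTwo_X0, φ_X0]
      · show φ (inclTwo (X 1)) = AdjoinRoot.of f (X 1)
        rw [inclTwo_X1, φ_X1]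
  exact DFunLike.congr_fun this s

lemma ψ_φ (g : MvPolynomial (Fin 4) ℤ) : ψ (φ g) = Ideal.Quotient.mk twoSegmentsIdeal g := by
  have : ψ.comp φ = Ideal.Quotient.mk twoSegmentsIdeal := by
    apply MvPolynomial.ringHom_ext
    · intro r
      simp [φ, ψ]
    · intro i
      fin_cases i
      · show ψ (φ (X 0)) = Ideal.Quotient.mk twoSegmentsIdeal (X 0)
        rw [φ_X0, ψ_of, inclTwo_X0]
      · show ψ (φ (X 1)) = Ideal.Quotient.mk twoSegmentsIdeal (X 1)
        rw [φ_X1, ψ_of, inclTwo_X1]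
      · show ψ (φ (X 2)) = Ideal.Quotient.mk twoSegmentsIdeal (X 2)
        rw [φ_X2, ψ_root]
      · show ψ (φ (X 3)) = Ideal.Quotient.mk twoSegmentsIdeal (X 3)
        rw [φ_X3, map_sub, ψ_of, ψ_root, inclTwo_c, ← map_sub,
          Ideal.Quotient.mk_eq_mk_iff_sub_mem, twoSegmentsIdeal]
        exact Ideal.subset_span (Or.inl rfl)
  exact DFunLike.congr_fun this g

end TwoSeg

open TwoSeg

/-- `ℤ[S]` is a free module over `ℤ[v₁,v₂]` with basis `{1, v_σ}`:
every element is uniquely of the form `p(v₁,v₂)·1 + q(v₁,v₂)·v_σ`. -/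
theorem twoSegments_faceRing_free :
    ∀ r : MvPolynomial (Fin 4) ℤ ⧸ twoSegmentsIdeal,
      ∃! pq : MvPolynomial (Fin 2) ℤ × MvPolynomial (Fin 2) ℤ,
        r = Ideal.Quotient.mk twoSegmentsIdeal (inclTwo pq.1) +
            Ideal.Quotient.mk twoSegmentsIdeal (inclTwo pq.2) *
              Ideal.Quotient.mk twoSegmentsIdeal (X 2) := by
  intro r
  set pb : PowerBasis B A := AdjoinRoot.powerBasis' hf with hpb
  have hdim : pb.dim = 2 := by rw [hpb, AdjoinRoot.powerBasis'_dim, hdeg]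
  set b : Module.Basis (Fin 2) B A := pb.basis.reindex (finCongr hdim) with hb
  have hb0 : b 0 = 1 := by
    rw [hb, Module.Basis.reindex_apply, pb.basis_eq_pow]
    simp
  have hb1 : b 1 = AdjoinRoot.root f := by
    rw [hb, Module.Basis.reindex_apply, pb.basis_eq_pow]
    simp [hpb]
  set a : A := φbar r with ha'
  set p : B := b.repr a 0 with hp
  set q : B := b.repr a 1 with hq
  have ha : a = AdjoinRoot.of f p + AdjoinRoot.of f q * AdjoinRoot.root f := by
    conv_lhs => rw [← b.sum_repr a]
    rw [Fin.sum_univ_two, hb0, hb1, ← hp, ← hq, Algebra.smul_def, Algebra.smul_def,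
      algMap_eq, mul_one]
  obtain ⟨g, rfl⟩ := Ideal.Quotient.mk_surjective r
  have hr : ψ a = Ideal.Quotient.mk twoSegmentsIdeal g := by
    rw [ha', φbar, Ideal.Quotient.lift_mk, ψ_φ]
  refine ⟨(p, q), ?_, ?_⟩
  · rw [← hr, ha, map_add, map_mul, ψ_of, ψ_of, ψ_root]
  · rintro ⟨p', q'⟩ h
    have h2 : a = AdjoinRoot.of f p' + AdjoinRoot.of f q' * AdjoinRoot.root f := by
      rw [ha', h]
      simp only [φbar, map_add, map_mul, Ideal.Quotient.lift_mk]
      rw [φ_inclTwo, φ_inclTwo, φ_X2]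
    have hli := Fintype.linearIndependent_iff.mp b.linearIndependent
    have hsum : ∑ i : Fin 2, (![p' - p, q' - q] i) • b i = 0 := by
      rw [Fin.sum_univ_two, hb0, hb1]
      simp only [Matrix.cons_val_zero, Matrix.cons_val_one, Matrix.head_cons,
        Algebra.smul_def, algMap_eq, mul_one, map_sub]
      have heq := h2.symm.trans ha
      linear_combination heq
    have key := hli ![p' - p, q' - q] hsum
    have e0 := key 0
    have e1 := key 1
    simp only [Matrix.cons_val_zero, Matrix.cons_val_one, Matrix.head_cons] at e0 e1
    have hp' : p' = p := sub_eq_zero.mp e0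
    have hq' : q' = q := sub_eq_zero.mp e1
    simp [hp', hq']
end

section
/- Let S be a simplicial poset on m vertices and a ∈ {0,1}^m, and let S_a be the subposet of elements σ with V(σ) ⊆ a. The map sending the dual of a simplex σ ∈ S_a \ {0̂} to the basis element u_{a∖V(σ)} v_σ defines an isomorphism of cochain complexes from the (reduced, shifted) simplicial cochain complex of S_a to the multidegree-2a component of the Koszul-type complex R*(S), where R*(S) is the free abelian group on monomials u_ω v_σ (ω ⊆ [m], ω ∩ V(σ) = ∅) with differential d(u_ω v_σ) = Σ_{i∈ω} ± u_{ω∖i} Σ_{η ∈ i∨σ} v_η. -/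
open MvPolynomial

/-- A finite poset with a bottom element is a *simplicial poset* if every lower
interval `[⊥, σ]` is a Boolean lattice, i.e. order-isomorphic to the poset of
subsets of a finite set. -/
def IsSimplicialPoset (α : Type) [Fintype α] [PartialOrder α] [OrderBot α] : Prop :=
  ∀ σ : α, ∃ k : ℕ, Nonempty (Set.Icc (⊥ : α) σ ≃o Finset (Fin k))

/-- The vertex set `V(σ)`: rank-one elements (atoms) below `σ`. -/
def vertexSet {α : Type} [PartialOrder α] [OrderBot α] (σ : α) : Set α :=
  {i : α | IsAtom i ∧ i ≤ σ}

/-- The rank `|σ|`, defined as the number of vertices of `σ`. -/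
noncomputable def srank {α : Type} [PartialOrder α] [OrderBot α] (σ : α) : ℕ :=
  (vertexSet σ).ncard

/-- `σ ∨ τ`: the set of least (minimal) common upper bounds. -/
def joins {α : Type} [PartialOrder α] (σ τ : α) : Set α :=
  {η : α | Minimal (fun x => σ ≤ x ∧ τ ≤ x) η}

/-- `σ ∧ τ`: the set of greatest (maximal) common lower bounds. -/
def meets {α : Type} [PartialOrder α] (σ τ : α) : Set α :=
  {ρ : α | Maximal (fun x => x ≤ σ ∧ x ≤ τ) ρ}

/-- The straightening ideal defining the face ring of a simplicial poset:
generated by `v_⊥ - 1`, the products `v_σ v_τ` with `σ ∨ τ = ∅`, and the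
elements `v_σ v_τ - v_{σ∧τ} ∑_{η ∈ σ∨τ} v_η`. -/
noncomputable def straightening (R : Type) [CommRing R]
    (α : Type) [Fintype α] [PartialOrder α] [OrderBot α] : Ideal (MvPolynomial α R) :=
  Ideal.span (({X ⊥ - 1} : Set (MvPolynomial α R)) ∪
    {p | ∃ σ τ : α, joins σ τ = ∅ ∧ p = X σ * X τ} ∪
    {p | ∃ σ τ ρ : α, ρ ∈ meets σ τ ∧ (joins σ τ).Nonempty ∧
      p = X σ * X τ - X ρ * ∑ η ∈ (Set.toFinite (joins σ τ)).toFinset, X η})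

/-- The face ring `R[S]` of a simplicial poset. -/
noncomputable abbrev faceRing (R : Type) [CommRing R]
    (α : Type) [Fintype α] [PartialOrder α] [OrderBot α] :=
  MvPolynomial α R ⧸ straightening R α

/-- The Koszul-type complex `R^*(S)`: the free abelian group on monomials
`u_ω v_σ` (encoded as pairs `(ω, σ)`), with differential
`d(u_ω v_σ) = ∑_{i ∈ ω} ± u_{ω∖i} ∑_{η ∈ i∨σ} v_η`, the sign being
`(-1)^{#{j ∈ ω : j < i}}` with respect to an ordering `ord` of the vertices. -/
noncomputable def koszulD {α : Type} [Fintype α] [PartialOrder α] (ord : α → ℕ) :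
    ((Set α × α) →₀ ℤ) →ₗ[ℤ] ((Set α × α) →₀ ℤ) :=
  Finsupp.lsum ℤ fun p => LinearMap.toSpanSingleton ℤ _
    (∑ i ∈ (Set.toFinite p.1).toFinset,
      ((-1 : ℤ) ^ (p.1 ∩ {j : α | ord j < ord i}).ncard) •
        ∑ η ∈ (Set.toFinite (joins i p.2)).toFinset,
          Finsupp.single (p.1 \ {i}, η) (1 : ℤ))

/-- The reduced simplicial cochain differential of the full subposet `S_a`
(simplices `σ` with `V(σ) ⊆ a`, including the empty simplex `⊥`), with the
incidence signs induced by the vertex ordering `ord`: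
`δ(σ*) = ∑ ± η*` over the `η ∈ S_a` covering `σ`. -/
noncomputable def subposetCochainD {α : Type} [Fintype α] [PartialOrder α] [OrderBot α]
    (a : Set α) (ord : α → ℕ) : (α →₀ ℤ) →ₗ[ℤ] (α →₀ ℤ) :=
  Finsupp.lsum ℤ fun σ => LinearMap.toSpanSingleton ℤ _
    (∑ η ∈ (Set.toFinite {η : α | σ ⋖ η ∧ vertexSet η ⊆ a}).toFinset,
      ((-1 : ℤ) ^ (((a \ vertexSet σ) ∩
          {j : α | ∃ i ∈ vertexSet η \ vertexSet σ, ord j < ord i}).ncard)) •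
        Finsupp.single η (1 : ℤ))

/-- The map sending the dual of a simplex `σ ∈ S_a` to `u_{a∖V(σ)} v_σ`. -/
noncomputable def hochsterMap {α : Type} [Fintype α] [PartialOrder α] [OrderBot α]
    (a : Set α) : (α →₀ ℤ) →ₗ[ℤ] ((Set α × α) →₀ ℤ) :=
  Finsupp.lmapDomain ℤ ℤ fun σ : α => (a \ vertexSet σ, σ)

set_option linter.unusedSectionVars false
section HochsterAux
variable {α : Type} [Fintype α] [PartialOrder α] [OrderBot α]

variable {α : Type} [Fintype α] [PartialOrder α] [OrderBot α]

private lemma icc_le_iff {η : α} {k : ℕ} (e : Set.Icc (⊥ : α) η ≃o Finset (Fin k))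
    {x y : Set.Icc (⊥ : α) η} : x.val ≤ y.val ↔ e x ⊆ e y := by
  rw [← Finset.le_iff_subset, e.le_iff_le, Subtype.coe_le_coe]

private lemma e_bot {η : α} {k : ℕ} (e : Set.Icc (⊥ : α) η ≃o Finset (Fin k)) :
    e ⟨⊥, le_rfl, bot_le⟩ = ∅ := by
  have : (⊥ : α) ≤ (e.symm ∅).val := bot_le
  have h := (icc_le_iff e (x := ⟨⊥, le_rfl, bot_le⟩) (y := e.symm ∅)).mp this
  simpa using h

private lemma e_top {η : α} {k : ℕ} (e : Set.Icc (⊥ : α) η ≃o Finset (Fin k)) :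
    e ⟨η, bot_le, le_rfl⟩ = Finset.univ := by
  have : (e.symm Finset.univ).val ≤ η := (e.symm Finset.univ).2.2
  have h := (icc_le_iff e (x := e.symm Finset.univ) (y := ⟨η, bot_le, le_rfl⟩)).mp this
  simp at h
  exact h

private lemma atom_iff_e {η : α} {k : ℕ} (e : Set.Icc (⊥ : α) η ≃o Finset (Fin k))
    {x : α} (hx : x ∈ Set.Icc (⊥ : α) η) :
    IsAtom x ↔ ∃ t, e ⟨x, hx⟩ = {t} := by
  constructor
  · rintro ⟨hne, hmin⟩
    have hA : e ⟨x, hx⟩ ≠ ∅ := by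
      intro h
      apply hne
      have : e ⟨x, hx⟩ = e ⟨⊥, le_rfl, bot_le⟩ := by rw [h, e_bot]
      have := e.injective this
      exact congrArg Subtype.val this
    obtain ⟨t, ht⟩ := Finset.nonempty_iff_ne_empty.mpr hA
    refine ⟨t, ?_⟩
    by_contra hne2
    -- consider b = e.symm (erase t)
    set b := e.symm ((e ⟨x, hx⟩).erase t) with hb
    have hble : b.val ≤ x := by
      rw [icc_le_iff e (y := ⟨x, hx⟩)]
      simp [hb]
      exact Finset.erase_subset _ _
    have hbx : b.val ≠ x := by
      intro h
      have : b = ⟨x, hx⟩ := Subtype.ext h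
      rw [hb] at this
      have := congrArg e this
      simp at this
      exact this ht
    have := hmin b.val (lt_of_le_of_ne hble hbx)
    -- b = ⊥ so erase = ∅ so A ⊆ {t}
    have hbbot : b = ⟨⊥, le_rfl, bot_le⟩ := Subtype.ext this
    have h2 : (e ⟨x, hx⟩).erase t = ∅ := by
      have := congrArg e hbbot
      simpa [hb, e_bot] using this
    apply hne2
    apply Finset.eq_singleton_iff_unique_mem.mpr
    refine ⟨ht, fun s hs => ?_⟩
    by_contra hst
    exact (Finset.eq_empty_iff_forall_notMem.mp h2 s) (Finset.mem_erase.mpr ⟨hst, hs⟩)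
  · rintro ⟨t, ht⟩
    constructor
    · intro h
      have : e ⟨x, hx⟩ = e ⟨⊥, le_rfl, bot_le⟩ := by
        congr 1
        exact Subtype.ext h
      rw [ht, e_bot] at this
      simp at this
    · intro b hb
      have hbm : b ∈ Set.Icc (⊥ : α) η := ⟨bot_le, le_trans hb.le (le_trans hx.2 le_rfl)⟩
      have hsub : e ⟨b, hbm⟩ ⊆ {t} := by rw [← ht]; exact (icc_le_iff e).mp hb.le
      have hne : e ⟨b, hbm⟩ ≠ {t} := by
        intro h
        rw [← ht] at h
        have := e.injective h
        exact hb.ne (congrArg Subtype.val this)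
      have : e ⟨b, hbm⟩ = ∅ := by
        rcases Finset.subset_singleton_iff.mp hsub with h | h
        · exact h
        · exact (hne h).elim
      have : (⟨b, hbm⟩ : Set.Icc (⊥:α) η) = ⟨⊥, le_rfl, bot_le⟩ := e.injective (by rw [this, e_bot])
      exact congrArg Subtype.val this

private lemma vertex_union {η σ i : α} {k : ℕ} (e : Set.Icc (⊥ : α) η ≃o Finset (Fin k))
    (hσ : σ ∈ Set.Icc (⊥ : α) η) (him : i ∈ Set.Icc (⊥ : α) η) (t : Fin k)
    (hA : e ⟨σ, hσ⟩ = Finset.univ \ {t}) (hei : e ⟨i, him⟩ = {t}) :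
    vertexSet η = vertexSet σ ∪ {i} := by
  ext x
  constructor
  · rintro ⟨hxa, hxη⟩
    have hxm : x ∈ Set.Icc (⊥ : α) η := ⟨bot_le, hxη⟩
    obtain ⟨s, hs⟩ := (atom_iff_e e hxm).mp hxa
    by_cases hst : s = t
    · right
      have : e ⟨x, hxm⟩ = e ⟨i, him⟩ := by rw [hs, hei, hst]
      have := e.injective this
      exact congrArg Subtype.val this
    · left
      refine ⟨hxa, ?_⟩
      have : e ⟨x, hxm⟩ ⊆ e ⟨σ, hσ⟩ := by
        rw [hs, hA]
        simp [hst]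
      exact (icc_le_iff e).mpr this
  · rintro (⟨hxa, hxσ⟩ | hx)
    · exact ⟨hxa, le_trans hxσ hσ.2⟩
    · rw [Set.mem_singleton_iff] at hx
      subst hx
      exact ⟨(atom_iff_e e him).mpr ⟨t, hei⟩, him.2⟩

lemma join_struct (hS : IsSimplicialPoset α) {i σ η : α}
    (hi : IsAtom i) (hni : ¬ i ≤ σ) (hη : η ∈ joins i σ) :
    σ ⋖ η ∧ vertexSet η = vertexSet σ ∪ {i} := by
  obtain ⟨k, ⟨e⟩⟩ := hS η
  obtain ⟨⟨hiη, hση⟩, hmin⟩ := hη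
  have him : i ∈ Set.Icc (⊥ : α) η := ⟨bot_le, hiη⟩
  have hσm : σ ∈ Set.Icc (⊥ : α) η := ⟨bot_le, hση⟩
  obtain ⟨t, hei⟩ := (atom_iff_e e him).mp hi
  have ht : t ∉ e ⟨σ, hσm⟩ := by
    intro h
    apply hni
    refine (icc_le_iff e (x := ⟨i, him⟩) (y := ⟨σ, hσm⟩)).mpr ?_
    rw [hei]; simpa using h
  -- ζ := e.symm (insert t A)
  set ζ := e.symm (insert t (e ⟨σ, hσm⟩)) with hζ
  have hiζ : i ≤ ζ.val := by
    refine (icc_le_iff e (x := ⟨i, him⟩) (y := ζ)).mpr ?_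
    rw [hei, hζ]; simp
  have hσζ : σ ≤ ζ.val := by
    refine (icc_le_iff e (x := ⟨σ, hσm⟩) (y := ζ)).mpr ?_
    rw [hζ]; simp [Finset.subset_insert]
  have hζη : η ≤ ζ.val := hmin ⟨hiζ, hσζ⟩ ζ.2.2
  have hζeq : ζ = ⟨η, bot_le, le_rfl⟩ := Subtype.ext (le_antisymm ζ.2.2 hζη)
  have huniv : insert t (e ⟨σ, hσm⟩) = Finset.univ := by
    have := congrArg e hζeq
    rw [hζ] at this
    simpa [e_top] using this
  have hA : e ⟨σ, hσm⟩ = Finset.univ \ {t} := by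
    ext s
    simp only [Finset.mem_sdiff, Finset.mem_univ, true_and, Finset.mem_singleton]
    constructor
    · intro hs
      rintro rfl
      exact ht hs
    · intro hs
      have : s ∈ insert t (e ⟨σ, hσm⟩) := by rw [huniv]; exact Finset.mem_univ s
      rcases Finset.mem_insert.mp this with h | h
      · exact (hs h).elim
      · exact h
  refine ⟨⟨lt_of_le_of_ne hση (fun h => hni (h ▸ hiη)), ?_⟩, vertex_union e hσm him t hA hei⟩
  · intro c hσc hcη
    have hcm : c ∈ Set.Icc (⊥ : α) η := ⟨bot_le, hcη.le⟩
    have h1 : e ⟨σ, hσm⟩ ⊆ e ⟨c, hcm⟩ := (icc_le_iff e).mp hσc.le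
    have h2 : e ⟨σ, hσm⟩ ≠ e ⟨c, hcm⟩ := fun h => hσc.ne (congrArg Subtype.val (e.injective h))
    have h3 : e ⟨c, hcm⟩ ≠ Finset.univ := by
      intro h
      have : e ⟨c, hcm⟩ = e ⟨η, bot_le, le_rfl⟩ := by rw [h, e_top]
      exact hcη.ne (congrArg Subtype.val (e.injective this))
    have hts : t ∈ e ⟨c, hcm⟩ := by
      by_contra htc
      apply h2
      apply Finset.Subset.antisymm h1
      intro s hs
      rw [hA]
      simp only [Finset.mem_sdiff, Finset.mem_univ, true_and, Finset.mem_singleton]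
      rintro rfl
      exact htc hs
    apply h3
    exact Finset.Subset.antisymm (Finset.subset_univ _)
      (huniv ▸ Finset.insert_subset hts h1)


private lemma cov_struct (hS : IsSimplicialPoset α) {σ η : α} (h : σ ⋖ η) :
    ∃ i, IsAtom i ∧ ¬ i ≤ σ ∧ η ∈ joins i σ ∧ vertexSet η = vertexSet σ ∪ {i} := by
  obtain ⟨k, ⟨e⟩⟩ := hS η
  have hσm : σ ∈ Set.Icc (⊥ : α) η := ⟨bot_le, h.1.le⟩
  -- for every t ∉ A, insert t A = univ
  have key : ∀ t, t ∉ e ⟨σ, hσm⟩ → insert t (e ⟨σ, hσm⟩) = Finset.univ := by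
    intro t ht
    set ζ := e.symm (insert t (e ⟨σ, hσm⟩)) with hζ
    have hσζ : σ < ζ.val := by
      refine lt_of_le_of_ne ((icc_le_iff e (x := ⟨σ, hσm⟩) (y := ζ)).mpr ?_) ?_
      · rw [hζ]; simp [Finset.subset_insert]
      · intro hc
        have : (⟨σ, hσm⟩ : Set.Icc (⊥:α) η) = ζ := Subtype.ext hc
        have := congrArg e this
        rw [hζ] at this
        simp at this
        exact ht (by rw [this]; exact Finset.mem_insert_self t _)
    have : ζ.val = η := by
      by_contra hne
      exact h.2 hσζ (lt_of_le_of_ne ζ.2.2 hne)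
    have hζeq : ζ = ⟨η, bot_le, le_rfl⟩ := Subtype.ext this
    have := congrArg e hζeq
    rw [hζ] at this
    simpa [e_top] using this
  have hAne : e ⟨σ, hσm⟩ ≠ Finset.univ := by
    intro hc
    have : e ⟨σ, hσm⟩ = e ⟨η, bot_le, le_rfl⟩ := by rw [hc, e_top]
    exact h.1.ne (congrArg Subtype.val (e.injective this))
  obtain ⟨t, ht⟩ : ∃ t, t ∉ e ⟨σ, hσm⟩ := by
    by_contra hc
    push_neg at hc
    exact hAne (Finset.eq_univ_of_forall hc)
  have hA : e ⟨σ, hσm⟩ = Finset.univ \ {t} := by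
    ext s
    simp only [Finset.mem_sdiff, Finset.mem_univ, true_and, Finset.mem_singleton]
    constructor
    · intro hs
      rintro rfl
      exact ht hs
    · intro hs
      by_contra hsA
      have h1 := key t ht
      have h2 := key s hsA
      have : s ∈ insert t (e ⟨σ, hσm⟩) := h1 ▸ Finset.mem_univ s
      rcases Finset.mem_insert.mp this with h' | h'
      · exact hs h'
      · exact hsA h'
  set i := (e.symm {t}).val with hidef
  have him : i ∈ Set.Icc (⊥ : α) η := (e.symm {t}).2
  have hei : e ⟨i, him⟩ = {t} := by
    have heq : (⟨i, him⟩ : Set.Icc (⊥:α) η) = e.symm {t} := Subtype.ext rfl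
    rw [heq]
    simp
  have hia : IsAtom i := (atom_iff_e e him).mpr ⟨t, hei⟩
  have hni : ¬ i ≤ σ := by
    intro hc
    have := (icc_le_iff e (x := ⟨i, him⟩) (y := ⟨σ, hσm⟩)).mp hc
    rw [hei] at this
    exact ht (this (Finset.mem_singleton_self t))
  refine ⟨i, hia, hni, ⟨⟨him.2, h.1.le⟩, ?_⟩, vertex_union e hσm him t hA hei⟩
  intro ζ hζ hζη
  have hζm : ζ ∈ Set.Icc (⊥ : α) η := ⟨bot_le, hζη⟩
  have h1 : e ⟨σ, hσm⟩ ⊆ e ⟨ζ, hζm⟩ := (icc_le_iff e).mp hζ.2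
  have h2 : t ∈ e ⟨ζ, hζm⟩ := by
    have := (icc_le_iff e (x := ⟨i, him⟩) (y := ⟨ζ, hζm⟩)).mp hζ.1
    rw [hei] at this
    exact this (Finset.mem_singleton_self t)
  have : e ⟨η, bot_le, le_rfl⟩ ⊆ e ⟨ζ, hζm⟩ := by
    rw [e_top, ← key t ht]
    exact Finset.insert_subset h2 h1
  exact (icc_le_iff e (x := ⟨η, bot_le, le_rfl⟩) (y := ⟨ζ, hζm⟩)).mpr this


end HochsterAux

/-- for `a ∈ {0,1}^m` (a set of vertices), the map
`σ* ↦ u_{a∖V(σ)} v_σ` is an isomorphism of cochain complexes from the reduced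
(shifted) simplicial cochain complex of the full subposet `S_a` onto the
multidegree-`2a` component of the Koszul-type complex `R^*(S)`:
it is injective, it carries the span of the dual simplices of `S_a` onto the
span of the monomials `u_ω v_σ` of multidegree `2a` (those with
`ω ∩ V(σ) = ∅` and `ω ∪ V(σ) = a`), and it commutes with the differentials. -/
theorem hochster_subcomplex_iso {α : Type} [Fintype α] [PartialOrder α] [OrderBot α]
    (hS : IsSimplicialPoset α) (a : Set α) (ha : ∀ i ∈ a, IsAtom i)
    (ord : α → ℕ) (hord : Function.Injective ord) :
    Function.Injective (hochsterMap (α := α) a) ∧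
    Submodule.map (hochsterMap (α := α) a)
        (Submodule.span ℤ {x : α →₀ ℤ | ∃ σ : α, vertexSet σ ⊆ a ∧ x = Finsupp.single σ 1}) =
      Submodule.span ℤ {y : (Set α × α) →₀ ℤ | ∃ (ω : Set α) (σ : α),
        (∀ i ∈ ω, IsAtom i) ∧ ω ∩ vertexSet σ = ∅ ∧ ω ∪ vertexSet σ = a ∧
        y = Finsupp.single (ω, σ) 1} ∧
    ∀ σ : α, vertexSet σ ⊆ a →
      hochsterMap a (subposetCochainD a ord (Finsupp.single σ 1)) =
        koszulD ord (hochsterMap a (Finsupp.single σ 1)) := by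
  have hmapinj : Function.Injective (fun σ : α => (a \ vertexSet σ, σ)) := by
    intro x y h
    exact congrArg Prod.snd h
  have hinj : Function.Injective (hochsterMap (α := α) a) := by
    intro x y h
    simp only [hochsterMap, Finsupp.lmapDomain_apply] at h
    exact Finsupp.mapDomain_injective hmapinj h
  refine ⟨hinj, ?_, ?_⟩
  · rw [Submodule.map_span]
    congr 1
    ext y
    simp only [Set.mem_image, Set.mem_setOf_eq]
    constructor
    · rintro ⟨x, ⟨σ, hσa, rfl⟩, rfl⟩
      refine ⟨a \ vertexSet σ, σ, fun i hi => ha i hi.1, ?_, Set.diff_union_of_subset hσa, ?_⟩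
      · ext j; simp only [Set.mem_inter_iff, Set.mem_diff, Set.mem_empty_iff_false, iff_false]
        rintro ⟨⟨_, hj⟩, hj'⟩; exact hj hj'
      · simp [hochsterMap, Finsupp.lmapDomain_apply, Finsupp.mapDomain_single]
    · rintro ⟨ω, σ, hω, hdisj, huni, rfl⟩
      have hσa : vertexSet σ ⊆ a := huni ▸ Set.subset_union_right
      have hωeq : a \ vertexSet σ = ω := by
        rw [← huni, Set.union_diff_right]
        ext j
        simp only [Set.mem_diff]
        refine ⟨fun h => h.1, fun h => ⟨h, fun hj => ?_⟩⟩
        exact absurd (Set.mem_inter h hj) (hdisj ▸ Set.notMem_empty j)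
      exact ⟨Finsupp.single σ 1, ⟨σ, hσa, rfl⟩, by
        simp [hochsterMap, Finsupp.lmapDomain_apply, Finsupp.mapDomain_single, hωeq]⟩
  · intro σ hσa
    have hmap : ∀ τ : α, hochsterMap (α:=α) a (Finsupp.single τ 1) =
        Finsupp.single (a \ vertexSet τ, τ) 1 := by
      intro τ
      simp [hochsterMap, Finsupp.lmapDomain_apply, Finsupp.mapDomain_single]
    rw [hmap σ, subposetCochainD, koszulD, Finsupp.lsum_single, Finsupp.lsum_single,
      LinearMap.toSpanSingleton_apply_one, LinearMap.toSpanSingleton_apply_one, map_sum]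
    simp only [map_smul, hmap, Finset.smul_sum]
    rw [Finset.sum_sigma']
    have hfact : ∀ p : (Σ _ : α, α),
        p ∈ ((Set.toFinite (a \ vertexSet σ)).toFinset.sigma
          fun i => (Set.toFinite (joins i σ)).toFinset) →
        (σ ⋖ p.2 ∧ vertexSet p.2 = vertexSet σ ∪ {p.1}) ∧
          p.1 ∈ a ∧ p.1 ∉ vertexSet σ ∧ IsAtom p.1 ∧ p.1 ≤ p.2 := by
      rintro ⟨i, η⟩ hp
      rw [Finset.mem_sigma, Set.Finite.mem_toFinset, Set.Finite.mem_toFinset] at hp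
      obtain ⟨⟨hia, hiV⟩, hj⟩ := hp
      have hatom : IsAtom i := ha i hia
      have hnle : ¬ i ≤ σ := fun h => hiV ⟨hatom, h⟩
      exact ⟨join_struct hS hatom hnle hj, hia, hiV, hatom, hj.1.1⟩
    refine (Finset.sum_bij (fun (p : Σ _ : α, α) _ => p.2) ?_ ?_ ?_ ?_).symm
    · intro p hp
      obtain ⟨⟨hcov, hV⟩, hia, _, _, _⟩ := hfact p hp
      rw [Set.Finite.mem_toFinset]
      refine ⟨hcov, ?_⟩
      rw [hV]
      exact Set.union_subset hσa (by simpa using hia)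
    · intro p hp q hq h
      obtain ⟨⟨_, hVp⟩, _, hpV, hpa, hple⟩ := hfact p hp
      obtain ⟨⟨_, hVq⟩, _, _, _, _⟩ := hfact q hq
      have h' : p.2 = q.2 := h
      have : p.1 ∈ vertexSet q.2 := h' ▸ (⟨hpa, hple⟩ : p.1 ∈ vertexSet p.2)
      rw [hVq] at this
      rcases this with h1 | h1
      · exact absurd h1 hpV
      · exact Sigma.ext h1 (heq_of_eq h')
    · intro b hb
      rw [Set.Finite.mem_toFinset] at hb
      obtain ⟨hcov, hVa⟩ := hb
      obtain ⟨i, hia, hnle, hj, hV⟩ := cov_struct hS hcov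
      have hiA : i ∈ a := hVa (hV ▸ Set.mem_union_right _ rfl)
      have hiV : i ∉ vertexSet σ := fun h => hnle h.2
      exact ⟨⟨i, b⟩, Finset.mem_sigma.mpr ⟨(Set.Finite.mem_toFinset _).mpr ⟨hiA, hiV⟩,
        (Set.Finite.mem_toFinset _).mpr hj⟩, rfl⟩
    · intro p hp
      obtain ⟨⟨hcov, hV⟩, hia, hiV, hatom, hple⟩ := hfact p hp
      have hdiff : vertexSet p.2 \ vertexSet σ = {p.1} := by
        rw [hV]
        ext x
        simp only [Set.mem_diff, Set.mem_union, Set.mem_singleton_iff]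
        constructor
        · rintro ⟨h1 | h1, h2⟩
          · exact absurd h1 h2
          · exact h1
        · rintro rfl
          exact ⟨Or.inr rfl, hiV⟩
      have hset1 : (a \ vertexSet σ) \ ({p.1} : Set α) = a \ vertexSet p.2 := by
        rw [hV, ← Set.diff_diff]
      have hset2 : {j : α | ∃ i ∈ vertexSet p.2 \ vertexSet σ, ord j < ord i} =
          {j : α | ord j < ord p.1} := by
        rw [hdiff]
        ext j
        simp
      simp only [hset1, hset2]
end
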